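/- Let Γ be a finite connected simple graph with vertex set V, let 𝒯 and 𝒯̃ be maximal tubings of Γ, and let w and w̃ be their weight vectors. Then, as functions V → ℤ, w̃ − w = Σ_{T ∈ 𝒯} m_T · (1_{v_T} − 1_{v_{σ(T)}}), where m_T = Σ_{v ∈ T} (w̃(v) − w(v)) ≥ 0 for every T ∈ 𝒯, v_T is the unique vertex of T not contained in any element of 𝒯 properly contained in T, and σ(T) is the minimal element of 𝒯 ∪ {V} properly containing T. (Equivalently, for positive reals (x_v)_{v∈V}: ∏_v x_v^{w̃(v)−w(v)} = ∏_{T∈𝒯} (x_{v_T}/x_{v_{σ(T)}})^{m_T} with all exponents m_T nonnegative.) -/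

import Mathlib

variable {V : Type*} [Fintype V] [DecidableEq V]

/-- A tube of a simple graph: a nonempty proper subset of vertices whose
induced subgraph is connected. -/
def IsTube (G : SimpleGraph V) (T : Finset V) : Prop :=
  T.Nonempty ∧ T ≠ Finset.univ ∧ (G.induce (T : Set V)).Connected

/-- A tubing: a set of tubes, pairwise either properly nested or disjoint with
no edge between them. -/
def IsTubing (G : SimpleGraph V) (𝒯 : Finset (Finset V)) : Prop :=
  (∀ T ∈ 𝒯, IsTube G T) ∧
  ∀ T ∈ 𝒯, ∀ T' ∈ 𝒯, T ≠ T' →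
    T ⊂ T' ∨ T' ⊂ T ∨
      ((∀ v ∈ T, v ∉ T') ∧ ∀ u ∈ T, ∀ v ∈ T', ¬ G.Adj u v)

/-- A maximal tubing: one not properly contained in any other tubing. -/
def IsMaxTubing (G : SimpleGraph V) (𝒯 : Finset (Finset V)) : Prop :=
  IsTubing G 𝒯 ∧ ∀ 𝒯' : Finset (Finset V), IsTubing G 𝒯' → 𝒯 ⊆ 𝒯' → 𝒯' = 𝒯

/-- `w` is the weight vector of the maximal tubing `𝒯`: for each vertex `v`,
if the minimal element `T` of `𝒯 ∪ {univ}` containing `v` is the singleton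
`{v}` then `w v = 0`, and otherwise (`|T| ≥ 2`)
`w v = 3^(|T|-2) - ∑_{v' ∈ T, v' ≠ v} w v'`. -/
def IsWeightVector (𝒯 : Finset (Finset V)) (w : V → ℤ) : Prop :=
  ∀ v : V, ∀ T ∈ insert Finset.univ 𝒯, v ∈ T →
    (∀ S ∈ insert Finset.univ 𝒯, v ∈ S → T ⊆ S) →
    (T = {v} → w v = 0) ∧
    (2 ≤ T.card → w v = 3 ^ (T.card - 2) - ∑ v' ∈ T.erase v, w v')

/-- The indicator function of a vertex, with values in `ℤ`. -/
def indic (a u : V) : ℤ := if u = a then 1 else 0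


namespace TB
set_option linter.unusedSectionVars false
attribute [local instance] Classical.propDecidable

open Finset

variable {V : Type*} [Fintype V] [DecidableEq V]

/-- reachability within a finite vertex set -/
def Reach (G : SimpleGraph V) (U : Finset V) : V → V → Prop :=
  Relation.ReflTransGen (fun a b => a ∈ U ∧ b ∈ U ∧ G.Adj a b)

lemma reach_refl (G : SimpleGraph V) (U : Finset V) (x : V) : Reach G U x x :=
  Relation.ReflTransGen.refl

lemma reach_trans {G : SimpleGraph V} {U : Finset V} {x y z : V}
    (h1 : Reach G U x y) (h2 : Reach G U y z) : Reach G U x z :=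
  Relation.ReflTransGen.trans h1 h2

lemma reach_symm {G : SimpleGraph V} {U : Finset V} {x y : V}
    (h : Reach G U x y) : Reach G U y x := by
  induction h with
  | refl => exact Relation.ReflTransGen.refl
  | tail _ h2 ih => exact Relation.ReflTransGen.head ⟨h2.2.1, h2.1, h2.2.2.symm⟩ ih

lemma reach_mono {G : SimpleGraph V} {U W : Finset V} (hUW : U ⊆ W) {x y : V}
    (h : Reach G U x y) : Reach G W x y := by
  induction h with
  | refl => exact Relation.ReflTransGen.refl
  | tail _ h2 ih => exact Relation.ReflTransGen.tail ih ⟨hUW h2.1, hUW h2.2.1, h2.2.2⟩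

lemma reach_mem_right {G : SimpleGraph V} {U : Finset V} {x y : V}
    (h : Reach G U x y) : x = y ∨ y ∈ U := by
  induction h with
  | refl => exact Or.inl rfl
  | tail _ h2 _ => exact Or.inr h2.2.1

/-- connectivity of the induced graph on a finite set -/
def ConnF (G : SimpleGraph V) (U : Finset V) : Prop :=
  ∀ x ∈ U, ∀ y ∈ U, Reach G U x y

lemma reach_of_walk {G : SimpleGraph V} {U : Finset V}
    {a b : (U : Set V)} (p : (G.induce (U : Set V)).Walk a b) :
    Reach G U a.1 b.1 := by
  induction p with
  | nil => exact reach_refl _ _ _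
  | cons h _ ih =>
    rename_i u v _ _
    exact Relation.ReflTransGen.head ⟨u.2, v.2, h⟩ ih

lemma connF_of_induce {G : SimpleGraph V} {U : Finset V}
    (h : (G.induce (U : Set V)).Connected) : ConnF G U := by
  intro x hx y hy
  obtain ⟨p⟩ := h.preconnected ⟨x, hx⟩ ⟨y, hy⟩
  exact reach_of_walk p

lemma induce_of_connF {G : SimpleGraph V} {U : Finset V}
    (hne : U.Nonempty) (h : ConnF G U) : (G.induce (U : Set V)).Connected := by
  rw [SimpleGraph.connected_iff]
  constructor
  · rintro ⟨x, hx⟩ ⟨y, hy⟩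
    have := h x hx y hy
    induction this with
    | refl => exact SimpleGraph.Reachable.refl _
    | @tail b c _ h2 ih =>
      refine SimpleGraph.Reachable.trans (ih h2.1) ?_
      exact SimpleGraph.Adj.reachable (by exact h2.2.2 :
        (G.induce (U : Set V)).Adj ⟨b, h2.1⟩ ⟨c, h2.2.1⟩)
  · obtain ⟨x, hx⟩ := hne
    exact ⟨⟨x, hx⟩⟩

lemma connF_univ {G : SimpleGraph V} (h : G.Connected) : ConnF G Finset.univ := by
  intro x _ y _
  obtain ⟨p⟩ := h.preconnected x y
  induction p with
  | nil => exact reach_refl _ _ _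
  | cons hadj _ ih =>
    exact Relation.ReflTransGen.head ⟨mem_univ _, mem_univ _, hadj⟩
      (ih (mem_univ _) (mem_univ _))

/-- the connected component of `v` inside `U` -/
noncomputable def comp (G : SimpleGraph V) (U : Finset V) (v : V) : Finset V :=
  U.filter (fun x => Reach G U v x)

lemma mem_comp {G : SimpleGraph V} {U : Finset V} {v x : V} :
    x ∈ comp G U v ↔ x ∈ U ∧ Reach G U v x := by
  simp [comp]

lemma self_mem_comp {G : SimpleGraph V} {U : Finset V} {v : V} (hv : v ∈ U) :
    v ∈ comp G U v := mem_comp.2 ⟨hv, reach_refl _ _ _⟩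

lemma comp_subset {G : SimpleGraph V} {U : Finset V} {v : V} :
    comp G U v ⊆ U := filter_subset _ _

lemma comp_eq_of_reach {G : SimpleGraph V} {U : Finset V} {v y : V}
    (h : Reach G U v y) : comp G U v = comp G U y := by
  ext x
  simp only [mem_comp]
  exact ⟨fun ⟨hx, hr⟩ => ⟨hx, reach_trans (reach_symm h) hr⟩,
         fun ⟨hx, hr⟩ => ⟨hx, reach_trans h hr⟩⟩

lemma comp_eq_of_mem {G : SimpleGraph V} {U : Finset V} {v y : V}
    (h : y ∈ comp G U v) : comp G U v = comp G U y :=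
  comp_eq_of_reach (mem_comp.1 h).2

lemma reach_comp {G : SimpleGraph V} {U : Finset V} {v x : V}
    (h : Reach G U v x) : Reach G (comp G U v) v x := by
  induction h with
  | refl => exact reach_refl _ _ _
  | @tail b c h1 h2 ih =>
    refine Relation.ReflTransGen.tail ih ?_
    refine ⟨mem_comp.2 ⟨h2.1, h1⟩, mem_comp.2 ⟨h2.2.1, Relation.ReflTransGen.tail h1 h2⟩, h2.2.2⟩

lemma connF_comp {G : SimpleGraph V} {U : Finset V} {v : V} :
    ConnF G (comp G U v) := by
  intro x hx y hy
  have hx' := (mem_comp.1 hx).2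
  have hy' := (mem_comp.1 hy).2
  have h1 : Reach G (comp G U v) v x := reach_comp hx'
  have h2 : Reach G (comp G U v) v y := reach_comp hy'
  exact reach_trans (reach_symm h1) h2

/-- the set of connected components of `U` -/
noncomputable def comps (G : SimpleGraph V) (U : Finset V) : Finset (Finset V) :=
  U.image (comp G U)

lemma comps_nonempty_mem {G : SimpleGraph V} {U : Finset V} {D : Finset V}
    (hD : D ∈ comps G U) : D.Nonempty := by
  obtain ⟨v, hv, rfl⟩ := Finset.mem_image.1 hD
  exact ⟨v, self_mem_comp hv⟩

lemma comps_subset {G : SimpleGraph V} {U : Finset V} {D : Finset V}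
    (hD : D ∈ comps G U) : D ⊆ U := by
  obtain ⟨v, hv, rfl⟩ := Finset.mem_image.1 hD
  exact comp_subset

lemma comps_connF {G : SimpleGraph V} {U : Finset V} {D : Finset V}
    (hD : D ∈ comps G U) : ConnF G D := by
  obtain ⟨v, _, rfl⟩ := Finset.mem_image.1 hD
  exact connF_comp

lemma comps_disjoint {G : SimpleGraph V} {U : Finset V} :
    (↑(comps G U) : Set (Finset V)).PairwiseDisjoint id := by
  rintro D hD E hE hne
  rw [Finset.mem_coe, comps, Finset.mem_image] at hD hE
  obtain ⟨v, hv, rfl⟩ := hD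
  obtain ⟨u, hu, rfl⟩ := hE
  show Disjoint (comp G U v) (comp G U u)
  rw [Finset.disjoint_left]
  intro x hx hx'
  exact hne (by rw [comp_eq_of_mem hx, comp_eq_of_mem hx'])

lemma comps_biUnion {G : SimpleGraph V} {U : Finset V} :
    (comps G U).biUnion id = U := by
  ext x
  simp only [Finset.mem_biUnion, id]
  constructor
  · rintro ⟨D, hD, hx⟩; exact comps_subset hD hx
  · intro hx; exact ⟨comp G U x, Finset.mem_image_of_mem _ hx, self_mem_comp hx⟩

lemma mem_own_comp_comps {G : SimpleGraph V} {U : Finset V} {x : V} (hx : x ∈ U) :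
    comp G U x ∈ comps G U ∧ x ∈ comp G U x :=
  ⟨Finset.mem_image_of_mem _ hx, self_mem_comp hx⟩

/-- a set reachable-connected within W, W contained in a union of pairwise
disjoint non-adjacent parts: reach stays in one part -/
lemma reach_stays {G : SimpleGraph V} {P : Finset (Finset V)}
    (hdisj : ∀ A ∈ P, ∀ B ∈ P, A ≠ B → (∀ v ∈ A, v ∉ B) ∧ ∀ u ∈ A, ∀ v ∈ B, ¬ G.Adj u v)
    {W : Finset V} (hW : W ⊆ P.biUnion id) {C : Finset V} (hC : C ∈ P)
    {x y : V} (hx : x ∈ C) (h : Reach G W x y) : y ∈ C := by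
  induction h with
  | refl => exact hx
  | @tail b c h1 h2 ih =>
    have hb : b ∈ C := ih
    have hcW : c ∈ W := h2.2.1
    obtain ⟨D, hD, hcD⟩ := Finset.mem_biUnion.1 (hW hcW)
    by_cases hDC : D = C
    · exact hDC ▸ hcD
    · exact absurd h2.2.2.symm ((hdisj D hD C hC hDC).2 c hcD b hb)

end TB

namespace TB

set_option linter.unusedSectionVars false
set_option maxHeartbeats 1000000

open Finset

variable {V : Type*} [Fintype V] [DecidableEq V]

section Tubing

variable {G : SimpleGraph V} {𝒯 : Finset (Finset V)}

lemma univ_not_mem (ht : IsTubing G 𝒯) : Finset.univ ∉ 𝒯 :=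
  fun h => (ht.1 _ h).2.1 rfl

lemma fam_nonempty (hG : G.Connected) (ht : IsTubing G 𝒯) {A : Finset V}
    (hA : A ∈ insert Finset.univ 𝒯) : A.Nonempty := by
  rcases Finset.mem_insert.1 hA with rfl | hA
  · have : Nonempty V := hG.nonempty
    exact Finset.univ_nonempty
  · exact (ht.1 _ hA).1

lemma fam_connF (hG : G.Connected) (ht : IsTubing G 𝒯) {A : Finset V}
    (hA : A ∈ insert Finset.univ 𝒯) : ConnF G A := by
  rcases Finset.mem_insert.1 hA with rfl | hA
  · exact connF_univ hG
  · exact connF_of_induce (ht.1 _ hA).2.2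

lemma compat (ht : IsTubing G 𝒯) {A B : Finset V}
    (hA : A ∈ insert Finset.univ 𝒯) (hB : B ∈ insert Finset.univ 𝒯)
    (hAB : (A ∩ B).Nonempty) : A ⊆ B ∨ B ⊆ A := by
  rcases Finset.mem_insert.1 hA with rfl | hA
  · exact Or.inr (Finset.subset_univ _)
  rcases Finset.mem_insert.1 hB with rfl | hB
  · exact Or.inl (Finset.subset_univ _)
  by_cases hne : A = B
  · exact Or.inl hne.le
  rcases ht.2 A hA B hB hne with h | h | h
  · exact Or.inl h.1
  · exact Or.inr h.1
  · obtain ⟨x, hx⟩ := hAB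
    rw [Finset.mem_inter] at hx
    exact absurd hx.2 (h.1 x hx.1)

lemma exists_minTube (ht : IsTubing G 𝒯) {U : Finset V} (hU : U.Nonempty) :
    ∃ A ∈ insert Finset.univ 𝒯, U ⊆ A ∧
      ∀ B ∈ insert Finset.univ 𝒯, U ⊆ B → A ⊆ B := by
  classical
  set 𝒞 := (insert Finset.univ 𝒯).filter (fun A => U ⊆ A) with h𝒞
  have hne : 𝒞.Nonempty :=
    ⟨Finset.univ, by simp [h𝒞]⟩
  obtain ⟨A, hA, hmin⟩ := Finset.exists_min_image 𝒞 Finset.card hne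
  rw [h𝒞, Finset.mem_filter] at hA
  refine ⟨A, hA.1, hA.2, ?_⟩
  intro B hB hUB
  have hcap : (A ∩ B).Nonempty := by
    obtain ⟨x, hx⟩ := hU
    exact ⟨x, Finset.mem_inter.2 ⟨hA.2 hx, hUB hx⟩⟩
  rcases compat ht hA.1 hB hcap with h | h
  · exact h
  · have hBc : B ∈ 𝒞 := by rw [h𝒞, Finset.mem_filter]; exact ⟨hB, hUB⟩
    have := hmin B hBc
    have : B = A := Finset.eq_of_subset_of_card_le h this
    exact this.ge

/-- a vertex of `A` contained in no element of `𝒯` properly contained in `A` -/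
def Free (𝒯 : Finset (Finset V)) (A : Finset V) (v : V) : Prop :=
  v ∈ A ∧ ∀ S ∈ 𝒯, S ⊂ A → v ∉ S

/-- maximal elements of `𝒯` properly contained in `A` -/
noncomputable def children (𝒯 : Finset (Finset V)) (A : Finset V) : Finset (Finset V) := by
  classical
  exact 𝒯.filter (fun C => C ⊂ A ∧ ∀ S ∈ 𝒯, C ⊂ S → ¬ S ⊂ A)

lemma children_mem {A C : Finset V} (h : C ∈ children 𝒯 A) :
    C ∈ 𝒯 ∧ C ⊂ A := by
  classical
  rw [children] at h
  simp only [Finset.mem_filter] at h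
  exact ⟨h.1, h.2.1⟩

lemma mem_child_of_mem {A S₀ : Finset V} {v : V} (hS₀ : S₀ ∈ 𝒯) (h1 : S₀ ⊂ A)
    (hv : v ∈ S₀) : ∃ C ∈ children 𝒯 A, v ∈ C := by
  classical
  set 𝒮 := 𝒯.filter (fun S => v ∈ S ∧ S ⊂ A) with h𝒮
  have hne : 𝒮.Nonempty := ⟨S₀, by rw [h𝒮, Finset.mem_filter]; exact ⟨hS₀, hv, h1⟩⟩
  obtain ⟨C, hC, hmax⟩ := Finset.exists_max_image 𝒮 Finset.card hne
  rw [h𝒮, Finset.mem_filter] at hC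
  refine ⟨C, ?_, hC.2.1⟩
  rw [children]; simp only [Finset.mem_filter]
  refine ⟨hC.1, hC.2.2, ?_⟩
  intro S hS hCS hSA
  have hvS : v ∈ S := hCS.1 hC.2.1
  have hSm : S ∈ 𝒮 := by rw [h𝒮, Finset.mem_filter]; exact ⟨hS, hvS, hSA⟩
  have := hmax S hSm
  exact absurd (Finset.card_lt_card hCS) (not_lt.2 this)

lemma children_disj (ht : IsTubing G 𝒯) {A : Finset V} :
    ∀ C ∈ children 𝒯 A, ∀ C' ∈ children 𝒯 A, C ≠ C' →
      (∀ x ∈ C, x ∉ C') ∧ ∀ x ∈ C, ∀ y ∈ C', ¬ G.Adj x y := by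
  intro C hC C' hC' hne
  obtain ⟨hCm, hCA⟩ := children_mem hC
  obtain ⟨hCm', hCA'⟩ := children_mem hC'
  rcases ht.2 C hCm C' hCm' hne with h | h | h
  · classical
    rw [children] at hC
    simp only [Finset.mem_filter] at hC
    exact absurd hCA' (hC.2.2 C' hCm' h)
  · classical
    rw [children] at hC'
    simp only [Finset.mem_filter] at hC'
    exact absurd hCA (hC'.2.2 C hCm h)
  · exact h

lemma children_sub_erase {A C : Finset V} {v : V} (hC : C ∈ children 𝒯 A)
    (hv : Free 𝒯 A v) : C ⊆ A.erase v := by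
  obtain ⟨hCm, hCA⟩ := children_mem hC
  intro x hx
  rw [Finset.mem_erase]
  exact ⟨fun h => hv.2 C hCm hCA (h ▸ hx), hCA.1 hx⟩

lemma free_exists (hG : G.Connected) (ht : IsTubing G 𝒯) {A : Finset V}
    (hA : A ∈ insert Finset.univ 𝒯) : ∃ v, Free 𝒯 A v := by
  by_contra hcon
  push_neg at hcon
  have hcov : ∀ v ∈ A, ∃ C ∈ children 𝒯 A, v ∈ C := by
    intro v hv
    have h := hcon v
    rw [Free] at h
    push_neg at h
    obtain ⟨S, hS, hSA, hvS⟩ := h hv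
    exact mem_child_of_mem hS hSA hvS
  obtain ⟨a, ha⟩ := fam_nonempty hG ht hA
  obtain ⟨C₀, hC₀, haC₀⟩ := hcov a ha
  have hsub : A ⊆ (children 𝒯 A).biUnion id := by
    intro v hv
    obtain ⟨C, hC, hvC⟩ := hcov v hv
    exact Finset.mem_biUnion.2 ⟨C, hC, hvC⟩
  have hAC₀ : A ⊆ C₀ := by
    intro y hy
    exact reach_stays (children_disj ht) hsub hC₀ haC₀
      (fam_connF hG ht hA a ha y hy)
  exact (children_mem hC₀).2.2 hAC₀

lemma free_unique (hG : G.Connected) (hmax : IsMaxTubing G 𝒯) {A : Finset V}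
    (hA : A ∈ insert Finset.univ 𝒯) {v v' : V}
    (h1 : Free 𝒯 A v) (h2 : Free 𝒯 A v') : v = v' := by
  classical
  by_contra hne
  have ht := hmax.1
  have hv'e : v' ∈ A.erase v := Finset.mem_erase.2 ⟨fun h => hne h.symm, h2.1⟩
  set C := comp G (A.erase v) v' with hC
  have hv'C : v' ∈ C := self_mem_comp hv'e
  have hCne : C.Nonempty := ⟨v', hv'C⟩
  have hCsub : C ⊆ A.erase v := comp_subset
  have hvC : v ∉ C := fun h => (Finset.mem_erase.1 (hCsub h)).1 rfl
  have hCuniv : C ≠ Finset.univ := fun h => hvC (h ▸ Finset.mem_univ v)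
  have hCtube : IsTube G C := ⟨hCne, hCuniv, induce_of_connF hCne connF_comp⟩
  have hCnot : C ∉ 𝒯 := by
    intro hCm
    have hCA : C ⊂ A := ⟨hCsub.trans (Finset.erase_subset _ _),
      fun h => hvC (h h1.1)⟩
    exact h2.2 C hCm hCA hv'C
  -- compatibility of C with any S ∈ 𝒯
  have key : ∀ S ∈ 𝒯, S ≠ C →
      (C ⊂ S ∨ S ⊂ C ∨ ((∀ x ∈ C, x ∉ S) ∧ ∀ x ∈ C, ∀ y ∈ S, ¬ G.Adj x y)) := by
    intro S hS hSC
    by_cases hcap : (A ∩ S).Nonempty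
    · rcases compat ht hA (Finset.mem_insert_of_mem hS) hcap with hAS | hSA
      · -- A ⊆ S : C ⊊ S
        left
        exact ⟨(hCsub.trans (Finset.erase_subset _ _)).trans hAS,
          fun h => hvC (h (hAS h1.1))⟩
      · by_cases hSA' : S = A
        · left
          rw [hSA']
          exact ⟨hCsub.trans (Finset.erase_subset _ _), fun h => hvC (h h1.1)⟩
        · -- S ⊊ A
          have hSAs : S ⊂ A := ⟨hSA, fun h => hSA' (Finset.Subset.antisymm hSA h)⟩
          have hvS : v ∉ S := h1.2 S hS hSAs
          have hv'S : v' ∉ S := h2.2 S hS hSAs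
          have hSsub : S ⊆ A.erase v := fun x hx =>
            Finset.mem_erase.2 ⟨fun h => hvS (h ▸ hx), hSA hx⟩
          by_cases hSCcap : (S ∩ C).Nonempty
          · right; left
            obtain ⟨s, hs⟩ := hSCcap
            rw [Finset.mem_inter] at hs
            have hSsubC : S ⊆ C := by
              intro s' hs'
              have hr : Reach G S s s' := connF_of_induce (ht.1 S hS).2.2 s hs.1 s' hs'
              have hr' : Reach G (A.erase v) s s' := reach_mono hSsub hr
              have : Reach G (A.erase v) v' s := (mem_comp.1 hs.2).2
              exact mem_comp.2 ⟨hSsub hs', reach_trans this hr'⟩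
            exact ⟨hSsubC, fun h => hv'S (h hv'C)⟩
          · right; right
            rw [Finset.not_nonempty_iff_eq_empty] at hSCcap
            constructor
            · intro x hx hxS
              have : x ∈ S ∩ C := Finset.mem_inter.2 ⟨hxS, hx⟩
              simp [hSCcap] at this
            · intro x hx y hy hadj
              have : y ∈ C := by
                refine mem_comp.2 ⟨hSsub hy, ?_⟩
                exact Relation.ReflTransGen.tail (mem_comp.1 hx).2
                  ⟨comp_subset hx, hSsub hy, hadj⟩
              have : y ∈ S ∩ C := Finset.mem_inter.2 ⟨hy, this⟩
              simp [hSCcap] at this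
    · -- A ∩ S = ∅
      right; right
      rw [Finset.not_nonempty_iff_eq_empty] at hcap
      have hAmem : A ∈ 𝒯 := by
        rcases Finset.mem_insert.1 hA with rfl | h
        · exfalso
          obtain ⟨s, hs⟩ := (ht.1 S hS).1
          have : s ∈ Finset.univ ∩ S := Finset.mem_inter.2 ⟨Finset.mem_univ s, hs⟩
          simp [hcap] at this
        · exact h
      have hASne : A ≠ S := by
        intro h
        obtain ⟨s, hs⟩ := (ht.1 S hS).1
        have : s ∈ A ∩ S := Finset.mem_inter.2 ⟨h ▸ hs, hs⟩
        simp [hcap] at this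
      rcases ht.2 A hAmem S hS hASne with h | h | h
      · exfalso
        obtain ⟨a, haa⟩ := fam_nonempty hG ht hA
        have : a ∈ A ∩ S := Finset.mem_inter.2 ⟨haa, h.1 haa⟩
        simp [hcap] at this
      · exfalso
        obtain ⟨s, hs⟩ := (ht.1 S hS).1
        have : s ∈ A ∩ S := Finset.mem_inter.2 ⟨h.1 hs, hs⟩
        simp [hcap] at this
      · constructor
        · intro x hx hxS
          exact h.1 x (hCsub.trans (Finset.erase_subset _ _) hx) hxS
        · intro x hx y hy
          exact h.2 x (hCsub.trans (Finset.erase_subset _ _) hx) y hy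
  -- insert C 𝒯 is a tubing
  have htub : IsTubing G (insert C 𝒯) := by
    constructor
    · intro T hT
      rcases Finset.mem_insert.1 hT with rfl | hT
      · exact hCtube
      · exact ht.1 T hT
    · intro T hT T' hT' hne'
      rcases Finset.mem_insert.1 hT with rfl | hTm
      · rcases Finset.mem_insert.1 hT' with rfl | hTm'
        · exact absurd rfl hne'
        · exact key T' hTm' (fun h => hne' h.symm)
      · rcases Finset.mem_insert.1 hT' with rfl | hTm'
        · rcases key T hTm hne' with h | h | h
          · exact Or.inr (Or.inl h)
          · exact Or.inl h
          · refine Or.inr (Or.inr ⟨?_, ?_⟩)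
            · intro x hx hxC
              exact h.1 x hxC hx
            · intro x hx y hy hadj
              exact h.2 y hy x hx hadj.symm
        · exact ht.2 T hTm T' hTm' hne'
  have := hmax.2 (insert C 𝒯) htub (Finset.subset_insert _ _)
  exact hCnot (this ▸ Finset.mem_insert_self C 𝒯)

lemma free_cover (hG : G.Connected) (hmax : IsMaxTubing G 𝒯) {A : Finset V}
    (hA : A ∈ insert Finset.univ 𝒯) {v : V} (hv : Free 𝒯 A v) :
    A.erase v = (children 𝒯 A).biUnion id := by
  apply Finset.Subset.antisymm
  · intro x hx
    rw [Finset.mem_erase] at hx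
    have hxnf : ¬ Free 𝒯 A x := by
      intro hxf
      exact hx.1 (free_unique hG hmax hA hxf hv)
    rw [Free] at hxnf
    push_neg at hxnf
    obtain ⟨S, hS, hSA, hxS⟩ := hxnf hx.2
    obtain ⟨C, hC, hxC⟩ := mem_child_of_mem hS hSA hxS
    exact Finset.mem_biUnion.2 ⟨C, hC, hxC⟩
  · intro x hx
    obtain ⟨C, hC, hxC⟩ := Finset.mem_biUnion.1 hx
    exact children_sub_erase hC hv hxC

end Tubing

end TB


namespace TB

/-- weight function: f 0 = f 1 = 0, f k = 3^(k-2) for k ≥ 2 -/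
def f (k : ℕ) : ℤ := if k ≤ 1 then 0 else 3 ^ (k - 2)

lemma f_zero : f 0 = 0 := rfl
lemma f_one : f 1 = 0 := rfl
lemma f_of_two_le {k : ℕ} (h : 2 ≤ k) : f k = 3 ^ (k - 2) := by
  unfold f; rw [if_neg (by omega)]

lemma f_nonneg (k : ℕ) : 0 ≤ f k := by
  unfold f; split
  · rfl
  · positivity

lemma f_pos_one_le {k : ℕ} (h : 2 ≤ k) : 1 ≤ f k := by
  rw [f_of_two_le h]; exact one_le_pow₀ (by norm_num)

lemma f_mono : Monotone f := by
  intro a b hab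
  rcases le_or_gt b 1 with hb | hb
  · have ha : a ≤ 1 := le_trans hab hb
    unfold f; rw [if_pos ha, if_pos hb]
  · rcases le_or_gt a 1 with ha | ha
    · rw [f_of_two_le hb]
      unfold f; rw [if_pos ha]; positivity
    · rw [f_of_two_le ha, f_of_two_le hb]
      exact pow_le_pow_right₀ (by norm_num) (by omega)

lemma f_step_convex {a b : ℕ} (h : a ≤ b) : f (a+1) - f a ≤ f (b+1) - f b := by
  rcases le_or_gt a 1 with ha | ha
  · rcases le_or_gt b 1 with hb | hb
    · interval_cases a <;> interval_cases b <;> simp [f]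
    · have hfa : f (a+1) - f a ≤ 1 := by interval_cases a <;> simp [f]
      have h2b : 2 ≤ b := hb
      rw [f_of_two_le h2b, f_of_two_le (by omega : 2 ≤ b + 1)]
      rw [show b+1-2 = (b-2)+1 by omega, pow_succ]
      have h1 : (1:ℤ) ≤ 3 ^ (b-2) := one_le_pow₀ (by norm_num)
      nlinarith
  · have h2a : 2 ≤ a := ha
    have h2b : 2 ≤ b := le_trans h2a h
    rw [f_of_two_le h2a, f_of_two_le (by omega : 2 ≤ a+1),
        f_of_two_le h2b, f_of_two_le (by omega : 2 ≤ b+1)]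
    rw [show a+1-2 = (a-2)+1 by omega, show b+1-2 = (b-2)+1 by omega,
        pow_succ, pow_succ]
    have hp : (3:ℤ)^(a-2) ≤ 3^(b-2) := pow_le_pow_right₀ (by norm_num) (by omega)
    nlinarith

lemma f_shift {a b : ℕ} (h : a ≤ b) (k : ℕ) : f b - f a ≤ f (b+k) - f (a+k) := by
  induction k with
  | zero => simp
  | succ n ih =>
    have := f_step_convex (show a+n ≤ b+n by omega)
    have h1 : f (a+n+1) - f (a+n) ≤ f (b+n+1) - f (b+n) := this
    have : f b - f a ≤ f (b+n) - f (a+n) := ih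
    rw [show a+(n+1) = a+n+1 by omega, show b+(n+1) = b+n+1 by omega]
    linarith

lemma f_superadd (a b : ℕ) : f a + f b ≤ f (a+b) := by
  rcases le_or_gt a 1 with ha | ha
  · have : f a = 0 := by interval_cases a <;> rfl
    rw [this, zero_add]; exact f_mono (by omega)
  · rcases le_or_gt b 1 with hb | hb
    · have : f b = 0 := by interval_cases b <;> rfl
      rw [this, add_zero]; exact f_mono (by omega)
    · rw [f_of_two_le (by omega), f_of_two_le (by omega), f_of_two_le (by omega)]
      have h1 : (3:ℤ)^(a-2) ≤ 3^(a+b-2-1) := pow_le_pow_right₀ (by norm_num) (by omega)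
      have h2 : (3:ℤ)^(b-2) ≤ 3^(a+b-2-1) := pow_le_pow_right₀ (by norm_num) (by omega)
      have h3 : (3:ℤ)^(a+b-2) = 3 * 3^(a+b-2-1) := by
        rw [← pow_succ']; congr 1; omega
      nlinarith [pow_pos (show (0:ℤ) < 3 by norm_num) (a+b-2-1)]

lemma f_double (k : ℕ) : f k + f k ≤ f (k+1) := by
  rcases le_or_gt k 1 with hk | hk
  · have : f k = 0 := by interval_cases k <;> rfl
    rw [this]; simpa using f_nonneg (k+1)
  · rw [f_of_two_le (by omega), f_of_two_le (by omega),
      show k+1-2 = (k-2)+1 by omega, pow_succ]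
    nlinarith [pow_pos (show (0:ℤ) < 3 by norm_num) (k-2)]

lemma f_pair {c e b d : ℕ} (h1 : e ≤ c) (h2 : d ≤ b) :
    (f (1+c) - f (1+e)) + (f (1+b) - f (1+d)) ≤ f (1+c+b) - f (1+e+d) := by
  have A : f (1+c) - f (1+e) ≤ f (1+c+b) - f (1+e+b) := f_shift (by omega) b
  have B : f (1+b) - f (1+d) ≤ f (1+b+e) - f (1+d+e) := f_shift (by omega) e
  have e1 : 1+b+e = 1+e+b := by omega
  have e2 : 1+d+e = 1+e+d := by omega
  rw [e1, e2] at B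
  linarith

lemma f_sum_conv {ι : Type*} (I : Finset ι) (c e : ι → ℕ) (h : ∀ i ∈ I, e i ≤ c i) :
    ∑ i ∈ I, (f (1 + c i) - f (1 + e i)) ≤
      f (1 + ∑ i ∈ I, c i) - f (1 + ∑ i ∈ I, e i) := by
  classical
  induction I using Finset.induction_on with
  | empty => simp
  | insert _ _ hx ih =>
    rename_i a s
    rw [Finset.sum_insert hx, Finset.sum_insert hx, Finset.sum_insert hx]
    have hs : ∀ i ∈ s, e i ≤ c i := fun i hi => h i (Finset.mem_insert_of_mem hi)
    have ha : e a ≤ c a := h a (Finset.mem_insert_self a s)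
    have hsum : (∑ i ∈ s, e i) ≤ ∑ i ∈ s, c i := Finset.sum_le_sum hs
    have := f_pair ha hsum
    have h2 := ih hs
    have e3 : 1 + c a + (∑ i ∈ s, c i) = 1 + (c a + ∑ i ∈ s, c i) := by omega
    have e4 : 1 + e a + (∑ i ∈ s, e i) = 1 + (e a + ∑ i ∈ s, e i) := by omega
    rw [e3, e4] at this
    linarith

lemma f_sum_superadd {ι : Type*} (I : Finset ι) (c : ι → ℕ) :
    ∑ i ∈ I, f (c i) ≤ f (∑ i ∈ I, c i) := by
  classical
  induction I using Finset.induction_on with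
  | empty => simp [f_zero]
  | insert _ _ hx ih =>
    rename_i a s
    rw [Finset.sum_insert hx, Finset.sum_insert hx]
    calc f (c a) + ∑ i ∈ s, f (c i) ≤ f (c a) + f (∑ i ∈ s, c i) := by linarith
    _ ≤ f (c a + ∑ i ∈ s, c i) := f_superadd _ _

end TB

namespace TB
set_option linter.unusedSectionVars false
set_option maxHeartbeats 1000000
open Finset

variable {V : Type*} [Fintype V] [DecidableEq V]
variable {G : SimpleGraph V} {𝒯 : Finset (Finset V)}

lemma children_pdisj (ht : IsTubing G 𝒯) {A : Finset V} :
    (↑(children 𝒯 A) : Set (Finset V)).PairwiseDisjoint id := by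
  rintro C hC C' hC' hne
  show Disjoint C C'
  rw [Finset.disjoint_left]
  intro x hx hx'
  exact (children_disj ht C (Finset.mem_coe.1 hC) C' (Finset.mem_coe.1 hC') hne).1 x hx hx'

lemma card_children (hG : G.Connected) (hmax : IsMaxTubing G 𝒯) {A : Finset V}
    (hA : A ∈ insert Finset.univ 𝒯) {v : V} (hv : Free 𝒯 A v) :
    A.card = 1 + ∑ C ∈ children 𝒯 A, C.card := by
  have h1 : (A.erase v).card + 1 = A.card := Finset.card_erase_add_one hv.1
  have h2 : (A.erase v).card = ∑ C ∈ children 𝒯 A, C.card := by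
    rw [free_cover hG hmax hA hv]
    rw [Finset.card_biUnion]
    · rfl
    · intro C hC C' hC' hne
      show Disjoint C C'
      rw [Finset.disjoint_left]
      intro x hx hx'
      exact (children_disj hmax.1 C hC C' hC' hne).1 x hx hx'
  omega

lemma free_min (ht : IsTubing G 𝒯) {A : Finset V} {v : V}
    (hA : A ∈ insert Finset.univ 𝒯) (hfree : Free 𝒯 A v) :
    ∀ B ∈ insert Finset.univ 𝒯, v ∈ B → A ⊆ B := by
  intro B hB hvB
  have hcap : (A ∩ B).Nonempty := ⟨v, Finset.mem_inter.2 ⟨hfree.1, hvB⟩⟩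
  rcases compat ht hA hB hcap with h | h
  · exact h
  · by_cases hBA : B = A
    · exact hBA.ge
    · rcases Finset.mem_insert.1 hB with rfl | hBm
      · exact absurd (Finset.univ_subset_iff.1 h).symm hBA
      · exact absurd hvB (hfree.2 B hBm ⟨h, fun hc => hBA (Finset.Subset.antisymm h hc)⟩)

lemma wsum (hG : G.Connected) (ht : IsTubing G 𝒯) {w : V → ℤ}
    (hw : IsWeightVector 𝒯 w) {A : Finset V} (hA : A ∈ insert Finset.univ 𝒯) :
    ∑ x ∈ A, w x = f A.card := by
  obtain ⟨v, hfree⟩ := free_exists hG ht hA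
  have spec := hw v A hA hfree.1 (free_min ht hA hfree)
  have hcard : 1 ≤ A.card := Finset.card_pos.2 ⟨v, hfree.1⟩
  rcases eq_or_lt_of_le hcard with h1 | h2
  · obtain ⟨a, ha⟩ := Finset.card_eq_one.1 h1.symm
    have hva : A = {v} := by
      have hv' : v ∈ ({a} : Finset V) := ha ▸ hfree.1
      rw [Finset.mem_singleton] at hv'
      rw [ha, hv']
    rw [hva, Finset.sum_singleton, spec.1 hva]
    rw [hva] at h1
    simp [f_one, ← h1]
  · have h2' : 2 ≤ A.card := h2
    have := spec.2 h2'
    have hsum : ∑ x ∈ A.erase v, w x + w v = ∑ x ∈ A, w x :=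
      Finset.sum_erase_add _ _ hfree.1
    rw [f_of_two_le h2']
    omega

lemma wfree (hG : G.Connected) (hmax : IsMaxTubing G 𝒯) {w : V → ℤ}
    (hw : IsWeightVector 𝒯 w) {A : Finset V} (hA : A ∈ insert Finset.univ 𝒯)
    {v : V} (hfree : Free 𝒯 A v) :
    w v = f A.card - ∑ C ∈ children 𝒯 A, f C.card := by
  have ht := hmax.1
  have spec := hw v A hA hfree.1 (free_min ht hA hfree)
  have hcard : 1 ≤ A.card := Finset.card_pos.2 ⟨v, hfree.1⟩
  rcases eq_or_lt_of_le hcard with h1 | h2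
  · obtain ⟨a, ha⟩ := Finset.card_eq_one.1 h1.symm
    have hva : A = {v} := by
      have hv' : v ∈ ({a} : Finset V) := ha ▸ hfree.1
      rw [Finset.mem_singleton] at hv'
      rw [ha, hv']
    have hch : children 𝒯 A = ∅ := by
      rw [Finset.eq_empty_iff_forall_notMem]
      intro C hC
      obtain ⟨hCm, hCA⟩ := children_mem hC
      have : C ⊆ {v} := hva ▸ hCA.1
      obtain ⟨c, hc⟩ := (ht.1 C hCm).1
      have hcv : c = v := Finset.mem_singleton.1 (this hc)
      exact hCA.2 (hva ▸ (Finset.singleton_subset_iff.2 (hcv ▸ hc)))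
    rw [spec.1 hva, hch]
    simp [← h1, f_one]
  · have h2' : 2 ≤ A.card := h2
    have heq := spec.2 h2'
    have hsplit : ∑ x ∈ A.erase v, w x = ∑ C ∈ children 𝒯 A, ∑ x ∈ C, w x := by
      rw [free_cover hG hmax hA hfree]
      exact Finset.sum_biUnion (children_pdisj ht)
    have hws : ∀ C ∈ children 𝒯 A, ∑ x ∈ C, w x = f C.card := by
      intro C hC
      exact wsum hG ht hw (Finset.mem_insert_of_mem (children_mem hC).1)
    rw [heq, hsplit, Finset.sum_congr rfl hws, f_of_two_le h2']

end TB

namespace TB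
set_option linter.unusedSectionVars false
set_option maxHeartbeats 2000000
open Finset

variable {V : Type*} [Fintype V] [DecidableEq V]
variable {G : SimpleGraph V} {𝒯 : Finset (Finset V)}

lemma claimB (hG : G.Connected) (hmax : IsMaxTubing G 𝒯) {w : V → ℤ}
    (hw : IsWeightVector 𝒯 w) :
    ∀ n : ℕ, ∀ T : Finset V, T.card ≤ n → T.Nonempty → ConnF G T →
      f T.card ≤ ∑ x ∈ T, w x := by
  classical
  have ht := hmax.1
  intro n
  induction n with
  | zero =>
    intro T hcard hne _
    exact absurd (Finset.card_pos.2 hne) (by omega)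
  | succ n IH =>
    intro T hcard hTne hTconn
    obtain ⟨A, hA, hTA, hAmin⟩ := exists_minTube ht hTne
    obtain ⟨u, hu⟩ := free_exists hG ht hA
    have hcov := free_cover hG hmax hA hu
    -- u ∈ T
    have huT : u ∈ T := by
      by_contra huT
      have hTsub : T ⊆ (children 𝒯 A).biUnion id := by
        intro x hx
        rw [← hcov]
        exact Finset.mem_erase.2 ⟨fun h => huT (h ▸ hx), hTA hx⟩
      obtain ⟨t, htT⟩ := hTne
      obtain ⟨C₀, hC₀, htC₀⟩ := Finset.mem_biUnion.1 (hTsub htT)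
      have hTC₀ : T ⊆ C₀ := by
        intro y hy
        exact reach_stays (children_disj ht) hTsub hC₀ htC₀ (hTconn t htT y hy)
      exact (children_mem hC₀).2.2
        (hAmin C₀ (Finset.mem_insert_of_mem (children_mem hC₀).1) hTC₀)
    set W := T.erase u with hW
    have hWA : W ⊆ A.erase u := fun x hx => by
      rw [Finset.mem_erase] at hx ⊢
      exact ⟨hx.1, hTA hx.2⟩
    have hWT : W ⊆ T := Finset.erase_subset _ _
    -- components of W and their assignment to children
    have hassign : ∀ D ∈ comps G W, ∃ C ∈ children 𝒯 A, D ⊆ C := by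
      intro D hD
      obtain ⟨d, hd⟩ := comps_nonempty_mem hD
      have hdW : d ∈ W := comps_subset hD hd
      obtain ⟨C, hC, hdC⟩ := Finset.mem_biUnion.1 (hcov ▸ hWA hdW)
      refine ⟨C, hC, ?_⟩
      intro y hy
      have hr : Reach G D d y := comps_connF hD d hd y hy
      have hr' : Reach G W d y := reach_mono (comps_subset hD) hr
      refine reach_stays (children_disj ht) ?_ hC hdC hr'
      intro x hx
      rw [← hcov]
      exact hWA hx
    set P : Finset V → Finset (Finset V) :=
      fun C => (comps G W).filter (fun D => D ⊆ C) with hP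
    -- comps = children.biUnion P
    have hcompsP : comps G W = (children 𝒯 A).biUnion P := by
      apply Finset.Subset.antisymm
      · intro D hD
        obtain ⟨C, hC, hDC⟩ := hassign D hD
        exact Finset.mem_biUnion.2 ⟨C, hC, Finset.mem_filter.2 ⟨hD, hDC⟩⟩
      · intro D hD
        obtain ⟨C, _, hDC⟩ := Finset.mem_biUnion.1 hD
        exact (Finset.mem_filter.1 hDC).1
    have hPdisj : (↑(children 𝒯 A) : Set (Finset V)).PairwiseDisjoint P := by
      rintro C hC C' hC' hne
      show Disjoint (P C) (P C')
      rw [Finset.disjoint_left]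
      intro D hD hD'
      obtain ⟨d, hd⟩ := comps_nonempty_mem (Finset.mem_filter.1 hD).1
      exact (children_disj ht C (Finset.mem_coe.1 hC) C' (Finset.mem_coe.1 hC') hne).1
        d ((Finset.mem_filter.1 hD).2 hd) ((Finset.mem_filter.1 hD').2 hd)
    -- T ∩ C = biUnion of P C
    have hTC : ∀ C ∈ children 𝒯 A, T ∩ C = (P C).biUnion id := by
      intro C hC
      apply Finset.Subset.antisymm
      · intro x hx
        rw [Finset.mem_inter] at hx
        have hxu : x ≠ u := by
          intro h
          exact (Finset.mem_erase.1 (children_sub_erase hC hu hx.2)).1 (h ▸ rfl)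
        have hxW : x ∈ W := Finset.mem_erase.2 ⟨hxu, hx.1⟩
        have hxD := mem_own_comp_comps (G := G) hxW
        obtain ⟨C', hC', hDC'⟩ := hassign _ hxD.1
        have hCC' : C = C' := by
          by_contra hne
          exact (children_disj ht C hC C' hC' hne).1 x hx.2 (hDC' hxD.2)
        refine Finset.mem_biUnion.2 ⟨comp G W x, ?_, hxD.2⟩
        exact Finset.mem_filter.2 ⟨hxD.1, hCC' ▸ hDC'⟩
      · intro x hx
        obtain ⟨D, hD, hxD⟩ := Finset.mem_biUnion.1 hx
        have hD1 := Finset.mem_filter.1 hD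
        exact Finset.mem_inter.2 ⟨hWT (comps_subset hD1.1 hxD), hD1.2 hxD⟩
    -- per-child inequality
    have hperchild : ∀ C ∈ children 𝒯 A,
        f C.card - ∑ D ∈ P C, f D.card ≤ f (1 + C.card) - f (1 + (T ∩ C).card) := by
      intro C hC
      have hCtube := (children_mem hC).1
      have hCsubW : (T ∩ C).card = ∑ D ∈ P C, D.card := by
        rw [hTC C hC, Finset.card_biUnion]
        · rfl
        · intro D hD D' hD' hne
          exact comps_disjoint (Finset.mem_coe.2 (Finset.mem_filter.1 hD).1)
            (Finset.mem_coe.2 (Finset.mem_filter.1 hD').1) hne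
      rcases Nat.lt_or_ge (P C).card 2 with hPc | hPc
      · rcases Nat.lt_or_ge (P C).card 1 with hP0 | hP1
        · -- no components
          have hPe : P C = ∅ := Finset.card_eq_zero.1 (by omega)
          rw [hPe] at hCsubW ⊢
          simp only [Finset.sum_empty, sub_zero] at *
          rw [hCsubW]
          have : f (1+0) = 0 := f_one
          rw [this, sub_zero]
          exact f_mono (by omega)
        · -- exactly one component
          obtain ⟨D, hD⟩ := Finset.card_eq_one.1 (le_antisymm (by omega) hP1)
          have hDP : D ∈ P C := hD ▸ Finset.mem_singleton_self D
          have hDC : D ⊆ C := (Finset.mem_filter.1 hDP).2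
          have hcard' : D.card ≤ C.card := Finset.card_le_card hDC
          have hTCD : (T ∩ C).card = D.card := by
            rw [hCsubW, hD, Finset.sum_singleton]
          rw [hD, Finset.sum_singleton, hTCD]
          have hshift := f_shift hcard' 1
          rw [show C.card + 1 = 1 + C.card by omega,
              show D.card + 1 = 1 + D.card by omega] at hshift
          linarith
      · -- at least two components : T ∩ C ⊊ C
        have hTCC : (T ∩ C).card < C.card := by
          have hsub : T ∩ C ⊆ C := Finset.inter_subset_right
          rcases lt_or_eq_of_le (Finset.card_le_card hsub) with h | h
          · exact h
          · exfalso
            have heq : T ∩ C = C := Finset.eq_of_subset_of_card_le hsub h.ge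
            obtain ⟨D, hD, D', hD', hne⟩ := Finset.one_lt_card.1 hPc
            obtain ⟨d, hd⟩ := comps_nonempty_mem (Finset.mem_filter.1 hD).1
            obtain ⟨d', hd'⟩ := comps_nonempty_mem (Finset.mem_filter.1 hD').1
            have hCW : C ⊆ W := by
              intro x hx
              have : x ∈ T ∩ C := by rw [heq]; exact hx
              rw [Finset.mem_inter] at this
              refine Finset.mem_erase.2 ⟨?_, this.1⟩
              intro h
              exact (Finset.mem_erase.1 (children_sub_erase hC hu hx)).1 (h ▸ rfl)
            have hr : Reach G C d d' :=
              connF_of_induce (ht.1 C hCtube).2.2 d ((Finset.mem_filter.1 hD).2 hd)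
                d' ((Finset.mem_filter.1 hD').2 hd')
            have hr' : Reach G W d d' := reach_mono hCW hr
            -- D and D' are comps containing d, d' resp.; equal comps
            obtain ⟨x, hxW, hDx⟩ := Finset.mem_image.1 (Finset.mem_filter.1 hD).1
            obtain ⟨x', hxW', hDx'⟩ := Finset.mem_image.1 (Finset.mem_filter.1 hD').1
            have h1 : D = comp G W d := by
              rw [← hDx]; exact comp_eq_of_mem (hDx ▸ hd)
            have h2 : D' = comp G W d' := by
              rw [← hDx']; exact comp_eq_of_mem (hDx' ▸ hd')
            exact hne (by rw [h1, h2, comp_eq_of_reach hr'])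
        have hnn : 0 ≤ ∑ D ∈ P C, f D.card :=
          Finset.sum_nonneg (fun D _ => f_nonneg _)
        have h1 : f (1 + (T∩C).card) ≤ f C.card := f_mono (by omega)
        have h2 : f C.card + f C.card ≤ f (C.card + 1) := f_double _
        have : f (C.card + 1) = f (1 + C.card) := by rw [Nat.add_comm]
        linarith
    -- cardinalities
    have hcardA : A.card = 1 + ∑ C ∈ children 𝒯 A, C.card := card_children hG hmax hA hu
    have hWcard : W.card + 1 = T.card := Finset.card_erase_add_one huT
    have hWun : W = (children 𝒯 A).biUnion (fun C => T ∩ C) := by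
      apply Finset.Subset.antisymm
      · intro x hx
        obtain ⟨C, hC, hxC⟩ := Finset.mem_biUnion.1 (hcov ▸ hWA hx)
        refine Finset.mem_biUnion.2 ⟨C, hC, ?_⟩
        exact Finset.mem_inter.2 ⟨hWT hx, hxC⟩
      · intro x hx
        obtain ⟨C, hC, hxC⟩ := Finset.mem_biUnion.1 hx
        rw [Finset.mem_inter] at hxC
        refine Finset.mem_erase.2 ⟨?_, hxC.1⟩
        intro h
        exact (Finset.mem_erase.1 (children_sub_erase hC hu hxC.2)).1 (h ▸ rfl)
    have hWcard2 : W.card = ∑ C ∈ children 𝒯 A, (T ∩ C).card := by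
      rw [hWun, Finset.card_biUnion]
      intro C hC C' hC' hne
      show Disjoint (T ∩ C) (T ∩ C')
      rw [Finset.disjoint_left]
      intro x hx hx'
      exact (children_disj ht C hC C' hC' hne).1 x (Finset.mem_inter.1 hx).2
        (Finset.mem_inter.1 hx').2
    -- main chain
    have hsplit : ∑ x ∈ W, w x = ∑ D ∈ comps G W, ∑ x ∈ D, w x := by
      conv_lhs => rw [← comps_biUnion (G := G) (U := W)]
      exact Finset.sum_biUnion comps_disjoint
    have hIH : ∑ D ∈ comps G W, f D.card ≤ ∑ D ∈ comps G W, ∑ x ∈ D, w x := by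
      refine Finset.sum_le_sum ?_
      intro D hD
      refine IH D ?_ (comps_nonempty_mem hD) (comps_connF hD)
      have h1 : D.card ≤ W.card := Finset.card_le_card (comps_subset hD)
      omega
    have hgroup : ∑ D ∈ comps G W, f D.card
        = ∑ C ∈ children 𝒯 A, ∑ D ∈ P C, f D.card := by
      rw [hcompsP]
      exact Finset.sum_biUnion hPdisj
    have hwu : w u = f A.card - ∑ C ∈ children 𝒯 A, f C.card :=
      wfree hG hmax hw hA hu
    have hsum : ∑ x ∈ W, w x + w u = ∑ x ∈ T, w x := Finset.sum_erase_add _ _ huT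
    have hconv : ∑ C ∈ children 𝒯 A, (f (1 + C.card) - f (1 + (T ∩ C).card))
        ≤ f (1 + ∑ C ∈ children 𝒯 A, C.card) - f (1 + ∑ C ∈ children 𝒯 A, (T ∩ C).card) :=
      f_sum_conv _ _ _ (fun C _ => Finset.card_le_card Finset.inter_subset_right)
    have hperchildsum : ∑ C ∈ children 𝒯 A, (f C.card - ∑ D ∈ P C, f D.card)
        ≤ ∑ C ∈ children 𝒯 A, (f (1 + C.card) - f (1 + (T ∩ C).card)) :=
      Finset.sum_le_sum hperchild
    have hfA : f (1 + ∑ C ∈ children 𝒯 A, C.card) = f A.card := by rw [← hcardA]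
    have hfT : f (1 + ∑ C ∈ children 𝒯 A, (T ∩ C).card) = f T.card := by
      rw [← hWcard2]; congr 1; omega
    have expand : ∑ C ∈ children 𝒯 A, (f C.card - ∑ D ∈ P C, f D.card)
        = ∑ C ∈ children 𝒯 A, f C.card - ∑ C ∈ children 𝒯 A, ∑ D ∈ P C, f D.card :=
      Finset.sum_sub_distrib (fun C => f C.card) (fun C => ∑ D ∈ P C, f D.card)
    rw [hfA, hfT] at hconv
    linarith

end TB

set_option maxHeartbeats 2000000

theorem weight_vector_difference_decomposition
    (G : SimpleGraph V) (hG : G.Connected)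
    (𝒯 𝒯' : Finset (Finset V)) (h : IsMaxTubing G 𝒯) (h' : IsMaxTubing G 𝒯')
    (w w' : V → ℤ) (hw : IsWeightVector 𝒯 w) (hw' : IsWeightVector 𝒯' w')
    (vT : Finset V → V)
    (hvT : ∀ T ∈ insert Finset.univ 𝒯,
      vT T ∈ T ∧ ∀ S ∈ 𝒯, S ⊂ T → vT T ∉ S)
    (σ : Finset V → Finset V)
    (hσ : ∀ T ∈ 𝒯, σ T ∈ insert Finset.univ 𝒯 ∧ T ⊂ σ T ∧
      ∀ S ∈ insert Finset.univ 𝒯, T ⊂ S → σ T ⊆ S) :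
    (∀ T ∈ 𝒯, 0 ≤ ∑ v ∈ T, (w' v - w v)) ∧
    ∀ u : V,
      w' u - w u =
        ∑ T ∈ 𝒯, (∑ v ∈ T, (w' v - w v)) *
          (indic (vT T) u - indic (vT (σ T)) u) := by
  classical
  have ht := h.1
  have ht' := h'.1
  constructor
  · -- nonnegativity
    intro T hT
    have h1 : ∑ v ∈ T, (w' v - w v) = (∑ v ∈ T, w' v) - ∑ v ∈ T, w v :=
      Finset.sum_sub_distrib w' w
    have h2 : ∑ v ∈ T, w v = TB.f T.card :=
      TB.wsum hG ht hw (Finset.mem_insert_of_mem hT)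
    have h3 : TB.f T.card ≤ ∑ v ∈ T, w' v :=
      TB.claimB hG h' hw' T.card T le_rfl (ht.1 T hT).1
        (TB.connF_of_induce (ht.1 T hT).2.2)
    rw [h1, h2]
    omega
  · -- decomposition
    intro u
    set d : V → ℤ := fun v => w' v - w v with hd
    -- total sum of d is zero
    have hdzero : ∑ v : V, d v = 0 := by
      have h1 : ∑ v : V, d v = (∑ v : V, w' v) - ∑ v : V, w v :=
        Finset.sum_sub_distrib w' w
      have h2 : ∑ v : V, w v = TB.f (Finset.univ : Finset V).card :=
        TB.wsum hG ht hw (Finset.mem_insert_self _ _)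
      have h3 : ∑ v : V, w' v = TB.f (Finset.univ : Finset V).card :=
        TB.wsum hG ht' hw' (Finset.mem_insert_self _ _)
      rw [h1, h2, h3]
      ring
    -- per-vertex telescoping
    have hper : ∀ v : V,
        ∑ T ∈ 𝒯.filter (fun T => v ∈ T), (indic (vT T) u - indic (vT (σ T)) u)
          = indic v u - indic (vT Finset.univ) u := by
      intro v
      set 𝒞 := 𝒯.filter (fun T => v ∈ T) with h𝒞
      obtain ⟨A₀, hA₀, hvA₀', hA₀min'⟩ :=
        TB.exists_minTube ht (U := {v}) (Finset.singleton_nonempty v)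
      have hvA₀ : v ∈ A₀ := Finset.singleton_subset_iff.1 hvA₀'
      have hA₀min : ∀ B ∈ insert Finset.univ 𝒯, v ∈ B → A₀ ⊆ B := by
        intro B hB hvB
        exact hA₀min' B hB (Finset.singleton_subset_iff.2 hvB)
      have hA₀free : TB.Free 𝒯 A₀ v := by
        refine ⟨hvA₀, ?_⟩
        intro S hS hSA hvS
        exact hSA.2 (hA₀min S (Finset.mem_insert_of_mem hS) hvS)
      have hvTA₀ : vT A₀ = v := by
        have hfree2 : TB.Free 𝒯 A₀ (vT A₀) :=
          ⟨(hvT A₀ hA₀).1, fun S hS hSA => (hvT A₀ hA₀).2 S hS hSA⟩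
        exact TB.free_unique hG h hA₀ hfree2 hA₀free
      have hunivnot : Finset.univ ∉ 𝒞 := by
        intro hmem
        exact TB.univ_not_mem ht (Finset.mem_filter.1 hmem).1
      -- injectivity of σ on 𝒞
      have hinj : ∀ T ∈ 𝒞, ∀ T' ∈ 𝒞, σ T = σ T' → T = T' := by
        intro T hT T' hT' hσeq
        have hTm := (Finset.mem_filter.1 hT).1
        have hTm' := (Finset.mem_filter.1 hT').1
        have hvTmem := (Finset.mem_filter.1 hT).2
        have hvTmem' := (Finset.mem_filter.1 hT').2
        by_contra hne
        have hcap : (T ∩ T').Nonempty := ⟨v, Finset.mem_inter.2 ⟨hvTmem, hvTmem'⟩⟩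
        rcases TB.compat ht (Finset.mem_insert_of_mem hTm)
          (Finset.mem_insert_of_mem hTm') hcap with hss | hss
        · have hTss : T ⊂ T' := ⟨hss, fun hc => hne (Finset.Subset.antisymm hss hc)⟩
          have := (hσ T hTm).2.2 T' (Finset.mem_insert_of_mem hTm') hTss
          exact (hσ T' hTm').2.1.2 (hσeq ▸ this)
        · have hTss : T' ⊂ T := ⟨hss, fun hc => hne (Finset.Subset.antisymm hc hss)⟩
          have := (hσ T' hTm').2.2 T (Finset.mem_insert_of_mem hTm) hTss
          exact (hσ T hTm).2.1.2 (hσeq ▸ this)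
      by_cases hA₀univ : A₀ = Finset.univ
      · -- no tube contains v
        have h𝒞empty : 𝒞 = ∅ := by
          rw [Finset.eq_empty_iff_forall_notMem]
          intro T hT
          have hTm := (Finset.mem_filter.1 hT).1
          have : A₀ ⊆ T :=
            hA₀min T (Finset.mem_insert_of_mem hTm) (Finset.mem_filter.1 hT).2
          have : T = Finset.univ :=
            Finset.univ_subset_iff.1 (hA₀univ ▸ this)
          exact TB.univ_not_mem ht (this ▸ hTm)
        rw [h𝒞empty, Finset.sum_empty, ← hvTA₀, hA₀univ]
        ring
      · have hA₀mem : A₀ ∈ 𝒯 := by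
          rcases Finset.mem_insert.1 hA₀ with hc | hc
          · exact absurd hc hA₀univ
          · exact hc
        have hA₀𝒞 : A₀ ∈ 𝒞 := Finset.mem_filter.2 ⟨hA₀mem, hvA₀⟩
        -- image of σ
        have himg : 𝒞.image σ = (insert Finset.univ 𝒞).erase A₀ := by
          apply Finset.Subset.antisymm
          · intro S hS
            obtain ⟨T, hT, rfl⟩ := Finset.mem_image.1 hS
            have hTm := (Finset.mem_filter.1 hT).1
            have hvS : v ∈ σ T := (hσ T hTm).2.1.1 (Finset.mem_filter.1 hT).2
            refine Finset.mem_erase.2 ⟨?_, ?_⟩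
            · intro hc
              have hsub : A₀ ⊆ T :=
                hA₀min T (Finset.mem_insert_of_mem hTm) (Finset.mem_filter.1 hT).2
              exact (hσ T hTm).2.1.2 (hc ▸ hsub)
            · rcases Finset.mem_insert.1 (hσ T hTm).1 with hc | hc
              · exact Finset.mem_insert.2 (Or.inl hc)
              · exact Finset.mem_insert_of_mem (Finset.mem_filter.2 ⟨hc, hvS⟩)
          · intro S hS
            rw [Finset.mem_erase] at hS
            have hSfam : S ∈ insert Finset.univ 𝒯 := by
              rcases Finset.mem_insert.1 hS.2 with rfl | hc
              · exact Finset.mem_insert_self _ _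
              · exact Finset.mem_insert_of_mem (Finset.mem_filter.1 hc).1
            have hvS : v ∈ S := by
              rcases Finset.mem_insert.1 hS.2 with rfl | hc
              · exact Finset.mem_univ v
              · exact (Finset.mem_filter.1 hc).2
            have hA₀S : A₀ ⊂ S := by
              refine ⟨hA₀min S hSfam hvS, ?_⟩
              intro hc
              exact hS.1 (Finset.Subset.antisymm hc (hA₀min S hSfam hvS))
            set 𝒟 := 𝒞.filter (fun T => T ⊂ S) with h𝒟
            have h𝒟ne : 𝒟.Nonempty := ⟨A₀, Finset.mem_filter.2 ⟨hA₀𝒞, hA₀S⟩⟩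
            obtain ⟨T'', hT'', hmax𝒟⟩ := Finset.exists_max_image 𝒟 Finset.card h𝒟ne
            rw [h𝒟, Finset.mem_filter] at hT''
            have hTm'' := (Finset.mem_filter.1 hT''.1).1
            have hσT : σ T'' ⊆ S := (hσ T'' hTm'').2.2 S hSfam hT''.2
            have hσeq : σ T'' = S := by
              by_contra hne
              have hσss : σ T'' ⊂ S := ⟨hσT, fun hc => hne (Finset.Subset.antisymm hσT hc)⟩
              have hσmem : σ T'' ∈ 𝒯 := by
                rcases Finset.mem_insert.1 (hσ T'' hTm'').1 with hc | hc
                · exfalso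
                  rw [hc] at hσss
                  exact hσss.2 (Finset.subset_univ S)
                · exact hc
              have hvσ : v ∈ σ T'' := (hσ T'' hTm'').2.1.1 (Finset.mem_filter.1 hT''.1).2
              have hσ𝒟 : σ T'' ∈ 𝒟 := by
                rw [h𝒟, Finset.mem_filter]
                exact ⟨Finset.mem_filter.2 ⟨hσmem, hvσ⟩, hσss⟩
              have hlt := Finset.card_lt_card (hσ T'' hTm'').2.1
              exact absurd (hmax𝒟 _ hσ𝒟) (by omega)
            exact Finset.mem_image.2 ⟨T'', Finset.mem_filter.2
              ⟨(Finset.mem_filter.1 hT''.1).1, (Finset.mem_filter.1 hT''.1).2⟩, hσeq⟩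
        have hsum2 : ∑ T ∈ 𝒞, indic (vT (σ T)) u
            = ∑ S ∈ (insert Finset.univ 𝒞).erase A₀, indic (vT S) u := by
          rw [← himg, Finset.sum_image (fun T hT T' hT' => hinj T hT T' hT')]
        have hsum3 : ∑ S ∈ (insert Finset.univ 𝒞).erase A₀, indic (vT S) u
              + indic (vT A₀) u
            = indic (vT Finset.univ) u + ∑ T ∈ 𝒞, indic (vT T) u := by
          rw [Finset.sum_erase_add _ _ (Finset.mem_insert_of_mem hA₀𝒞)]
          rw [Finset.sum_insert hunivnot]
        rw [Finset.sum_sub_distrib, hsum2, ← hvTA₀]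
        linarith
    -- assemble
    have hswap : ∑ T ∈ 𝒯, (∑ v ∈ T, d v) * (indic (vT T) u - indic (vT (σ T)) u)
        = ∑ v : V, d v *
            ∑ T ∈ 𝒯.filter (fun T => v ∈ T), (indic (vT T) u - indic (vT (σ T)) u) := by
      have step1 : ∀ T ∈ 𝒯, (∑ v ∈ T, d v) * (indic (vT T) u - indic (vT (σ T)) u)
          = ∑ v : V, (if v ∈ T then d v * (indic (vT T) u - indic (vT (σ T)) u) else 0) := by
        intro T _
        rw [Finset.sum_mul]
        rw [Finset.sum_ite_mem]
        rw [Finset.univ_inter]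
      rw [Finset.sum_congr rfl step1, Finset.sum_comm]
      refine Finset.sum_congr rfl ?_
      intro v _
      rw [Finset.mul_sum, Finset.sum_filter]
    rw [hswap]
    have : ∀ v : V, d v *
        (∑ T ∈ 𝒯.filter (fun T => v ∈ T), (indic (vT T) u - indic (vT (σ T)) u))
        = d v * (indic v u - indic (vT Finset.univ) u) := by
      intro v; rw [hper v]
    rw [Finset.sum_congr rfl (fun v _ => this v)]
    have hexp : ∑ v : V, d v * (indic v u - indic (vT Finset.univ) u)
        = (∑ v : V, d v * indic v u) - (∑ v : V, d v) * indic (vT Finset.univ) u := by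
      have hh : ∀ v : V, d v * (indic v u - indic (vT Finset.univ) u)
          = d v * indic v u - d v * indic (vT Finset.univ) u := fun v => by ring
      rw [Finset.sum_congr rfl (fun v _ => hh v), Finset.sum_sub_distrib, Finset.sum_mul]
    rw [hexp, hdzero]
    have hpick : ∑ v : V, d v * indic v u = d u := by
      have : ∀ v : V, d v * indic v u = if u = v then d v else 0 := by
        intro v
        rw [indic]
        split <;> ring
      rw [Finset.sum_congr rfl (fun v _ => this v), Finset.sum_ite_eq]
      simp
    rw [hpick]
    simp [hd]
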